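/- Let G and H be graphs with G connected and |V(G)|, |V(H)| ≥ 2. Then the edge-connectivity of the lexicographic product satisfies λ(G ∘ H) = min{ λ(G)·|V(H)|², δ(H) + δ(G)·|V(H)| }. -/

import Mathlib

open Classical

variable {V W : Type*}

/-- An `S`-Steiner tree: a subgraph of `G` that is a tree and contains `S`. -/
def IsSteinerTree (G : SimpleGraph V) (S : Set V) (T : G.Subgraph) : Prop :=
  S ⊆ T.verts ∧ T.coe.IsTree

/-- There exist `n` pairwise edge-disjoint `S`-Steiner trees in `G`. -/
def HasSteinerPacking (G : SimpleGraph V) (S : Set V) (n : ℕ) : Prop :=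
  ∃ T : Fin n → G.Subgraph, (∀ i, IsSteinerTree G S (T i)) ∧
    ∀ i j, i ≠ j → (T i).edgeSet ∩ (T j).edgeSet = ∅

/-- `λ(S)`: maximum number of pairwise edge-disjoint `S`-Steiner trees. -/
noncomputable def steinerNum (G : SimpleGraph V) (S : Set V) : ℕ :=
  sSup {n | HasSteinerPacking G S n}

/-- Generalized `k`-edge-connectivity `λ_k(G)`. -/
noncomputable def genEdgeConn (G : SimpleGraph V) (k : ℕ) : ℕ :=
  sInf {m | ∃ S : Set V, S.Finite ∧ S.ncard = k ∧ steinerNum G S = m}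

/-- Edge-connectivity: minimum number of edges whose deletion disconnects `G`. -/
noncomputable def edgeConn (G : SimpleGraph V) : ℕ :=
  sInf {m | ∃ F : Set (Sym2 V), F ⊆ G.edgeSet ∧ F.ncard = m ∧ ¬ (G.deleteEdges F).Connected}

/-- Degree of a vertex as the cardinality of its neighbor set. -/
noncomputable def degOf (G : SimpleGraph V) (v : V) : ℕ :=
  (G.neighborSet v).ncard

/-- Minimum degree. -/
noncomputable def minDeg (G : SimpleGraph V) : ℕ :=
  sInf {d | ∃ v, degOf G v = d}

/-- The lexicographic product `G ∘ H`. -/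
def lexProd (G : SimpleGraph V) (H : SimpleGraph W) : SimpleGraph (V × W) where
  Adj p q := G.Adj p.1 q.1 ∨ (p.1 = q.1 ∧ H.Adj p.2 q.2)
  symm := by
    constructor
    rintro p q (h | ⟨h1, h2⟩)
    · exact Or.inl h.symm
    · exact Or.inr ⟨h1.symm, h2.symm⟩
  loopless := by
    constructor
    rintro p (h | ⟨_, h⟩)
    · exact G.irrefl h
    · exact H.irrefl h


section EdgeConnHelpers

variable {α β : Type*}

private lemma ncardProd (s : Set α) (t : Set β) : (s ×ˢ t).ncard = s.ncard * t.ncard := by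
  rw [← Nat.card_coe_set_eq, ← Nat.card_coe_set_eq, ← Nat.card_coe_set_eq,
    Nat.card_congr (Equiv.Set.prod s t), Nat.card_prod]

private lemma reachInv' {Γ : SimpleGraph α} {P : α → Prop}
    (hP : ∀ p q, Γ.Adj p q → P p → P q) {x y : α} (h : Γ.Reachable x y) : P x → P y := by
  obtain ⟨w⟩ := h
  induction w with
  | nil => exact id
  | cons h p ih => exact fun hx => ih (hP _ _ h hx)

private lemma notConnDeleteAll [Fintype α] (Γ : SimpleGraph α) (h2 : 2 ≤ Fintype.card α) :
    ¬ (Γ.deleteEdges Γ.edgeSet).Connected := by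
  obtain ⟨x, y, hxy⟩ := Fintype.exists_pair_of_one_lt_card (α := α) (by omega)
  intro hc
  have hr := hc.preconnected x y
  have : x ≠ y → y ≠ y := reachInv' (P := fun z => z ≠ y) (fun p q hpq _ => by
    rw [SimpleGraph.deleteEdges_adj, SimpleGraph.mem_edgeSet] at hpq
    exact absurd hpq.1 hpq.2) hr
  exact this hxy rfl

private lemma exists_min_cut [Fintype α] (Γ : SimpleGraph α) (h2 : 2 ≤ Fintype.card α) :
    ∃ F : Set (Sym2 α), F ⊆ Γ.edgeSet ∧ F.ncard = edgeConn Γ ∧ ¬ (Γ.deleteEdges F).Connected := by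
  have hne : {m | ∃ F : Set (Sym2 α), F ⊆ Γ.edgeSet ∧ F.ncard = m ∧
      ¬ (Γ.deleteEdges F).Connected}.Nonempty :=
    ⟨_, Γ.edgeSet, subset_rfl, rfl, notConnDeleteAll Γ h2⟩
  exact Nat.sInf_mem hne

private lemma edgeConn_le' [Fintype α] {Γ : SimpleGraph α} {F : Set (Sym2 α)}
    (h1 : F ⊆ Γ.edgeSet) (h2 : ¬ (Γ.deleteEdges F).Connected) : edgeConn Γ ≤ F.ncard :=
  Nat.sInf_le ⟨F, h1, rfl, h2⟩

private lemma exists_minDeg [Nonempty α] (Γ : SimpleGraph α) : ∃ v, degOf Γ v = minDeg Γ :=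
  Nat.sInf_mem (⟨_, Classical.arbitrary α, rfl⟩ : {d | ∃ v, degOf Γ v = d}.Nonempty)

private lemma one_le_minDeg [Fintype α] {Γ : SimpleGraph α} (hc : Γ.Connected)
    (h2 : 2 ≤ Fintype.card α) : 1 ≤ minDeg Γ := by
  have : Nonempty α := Fintype.card_pos_iff.mp (by omega)
  obtain ⟨v, hv⟩ := exists_minDeg Γ
  obtain ⟨u, hu⟩ := Fintype.exists_ne_of_one_lt_card (by omega) v
  obtain ⟨w⟩ := hc.preconnected v u
  rw [← hv]
  cases w with
  | nil => exact absurd rfl hu.symm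
  | cons h p => exact (Set.ncard_pos (Set.toFinite _)).mpr ⟨_, h⟩

private lemma crossPairs_le_cut [Fintype α] {Γ : SimpleGraph α} {A : Set α} {F : Set (Sym2 α)}
    (hF : ∀ p q, Γ.Adj p q → p ∈ A → q ∉ A → s(p, q) ∈ F) :
    {pq : α × α | Γ.Adj pq.1 pq.2 ∧ pq.1 ∈ A ∧ pq.2 ∉ A}.ncard ≤ F.ncard := by
  apply Set.ncard_le_ncard_of_injOn (fun pq => s(pq.1, pq.2))
  · rintro ⟨p, q⟩ ⟨hadj, hp, hq⟩
    exact hF p q hadj hp hq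
  · rintro ⟨p, q⟩ ⟨hadj, hp, hq⟩ ⟨p', q'⟩ ⟨hadj', hp', hq'⟩ h
    simp only [Sym2.eq_iff] at h
    rcases h with ⟨rfl, rfl⟩ | ⟨rfl, rfl⟩
    · rfl
    · exact absurd hp' hq

private lemma ncard_incidenceSet' [Fintype α] (Γ : SimpleGraph α) (v : α) :
    (Γ.incidenceSet v).ncard = degOf Γ v := by
  rw [degOf, ← Nat.card_coe_set_eq, ← Nat.card_coe_set_eq]
  exact Nat.card_congr (Γ.incidenceSetEquivNeighborSet v)

end EdgeConnHelpers

section LexHelpers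

variable {V' W' : Type*} [Fintype V'] [Fintype W']

private lemma lex_neighborSet (G : SimpleGraph V') (H : SimpleGraph W') (u : V') (v : W') :
    (lexProd G H).neighborSet (u, v) =
      (G.neighborSet u ×ˢ Set.univ) ∪ ({u} ×ˢ H.neighborSet v) := by
  ext ⟨u', w'⟩
  simp only [SimpleGraph.mem_neighborSet, lexProd, Set.mem_union, Set.mem_prod,
    Set.mem_univ, and_true, Set.mem_singleton_iff]
  constructor
  · rintro (h | ⟨h1, h2⟩)
    · exact Or.inl h
    · exact Or.inr ⟨h1.symm, h2⟩
  · rintro (h | ⟨h1, h2⟩)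
    · exact Or.inl h
    · exact Or.inr ⟨h1.symm, h2⟩

private lemma lex_degOf (G : SimpleGraph V') (H : SimpleGraph W') (u : V') (v : W') :
    degOf (lexProd G H) (u, v) = degOf G u * Fintype.card W' + degOf H v := by
  rw [degOf, lex_neighborSet, Set.ncard_union_eq ?disj (Set.toFinite _) (Set.toFinite _),
    ncardProd, ncardProd, Set.ncard_univ, Nat.card_eq_fintype_card, Set.ncard_singleton,
    one_mul]
  rfl
  case disj =>
    rw [Set.disjoint_left]
    rintro ⟨u', w'⟩ ⟨h1, -⟩ ⟨h2, -⟩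
    simp only [SimpleGraph.mem_neighborSet] at h1
    simp only [Set.mem_singleton_iff] at h2
    exact h1.ne' (h2 ▸ rfl)

private lemma ub2' (G : SimpleGraph V') (H : SimpleGraph W') (u₀ : V') (v₀ : W')
    (hW : 2 ≤ Fintype.card W') :
    edgeConn (lexProd G H) ≤ degOf (lexProd G H) (u₀, v₀) := by
  rw [← ncard_incidenceSet']
  apply edgeConn_le' (SimpleGraph.incidenceSet_subset _ _)
  intro hc
  obtain ⟨v₁, hv₁⟩ := Fintype.exists_ne_of_one_lt_card (α := W') (by omega) v₀
  have hr := hc.preconnected (u₀, v₁) (u₀, v₀)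
  have hkey : (u₀, v₁) = (u₀, v₀) := by
    refine reachInv' (P := fun z => z = (u₀, v₀)) ?_ hr.symm rfl
    rintro p q hadj rfl
    rw [SimpleGraph.deleteEdges_adj] at hadj
    exact absurd ⟨((lexProd G H).mem_edgeSet).mpr hadj.1, Sym2.mem_mk_left _ _⟩ hadj.2
  exact hv₁ (congrArg Prod.snd hkey)

private lemma ub1' (G : SimpleGraph V') (H : SimpleGraph W') (hW : 1 ≤ Fintype.card W')
    {F₀ : Set (Sym2 V')} (hsub : F₀ ⊆ G.edgeSet) (hdisc : ¬ (G.deleteEdges F₀).Connected)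
    (hV : 2 ≤ Fintype.card V') :
    edgeConn (lexProd G H) ≤ F₀.ncard * Fintype.card W' ^ 2 := by
  have hneV : Nonempty V' := Fintype.card_pos_iff.mp (by omega)
  have hneW : Nonempty W' := Fintype.card_pos_iff.mp (by omega)
  set F' : Set (Sym2 (V' × W')) :=
    {s | s ∈ (lexProd G H).edgeSet ∧ Sym2.map Prod.fst s ∈ F₀} with hF'
  have hfsub : F' ⊆ (lexProd G H).edgeSet := fun s hs => hs.1
  have hdisc' : ¬ ((lexProd G H).deleteEdges F').Connected := by
    intro hc
    rw [SimpleGraph.connected_iff] at hdisc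
    push_neg at hdisc
    have hpre : ¬ (G.deleteEdges F₀).Preconnected := by
      intro hp
      exact (hdisc hp).false hneV.some
    rw [SimpleGraph.Preconnected] at hpre
    push_neg at hpre
    obtain ⟨u₀, u₁, hu⟩ := hpre
    obtain ⟨w₀⟩ := hneW
    have hr := hc.preconnected (u₀, w₀) (u₁, w₀)
    have : (G.deleteEdges F₀).Reachable u₀ (u₁, w₀).1 := by
      refine reachInv' (P := fun z => (G.deleteEdges F₀).Reachable u₀ z.1) ?_ hr
        (SimpleGraph.Reachable.refl _)
      rintro p q hadj hp
      rw [SimpleGraph.deleteEdges_adj] at hadj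
      rcases hadj.1 with h | ⟨h, -⟩
      · refine hp.trans (SimpleGraph.Adj.reachable ?_)
        rw [SimpleGraph.deleteEdges_adj]
        refine ⟨h, fun hmem => hadj.2 ?_⟩
        exact ⟨((lexProd G H).mem_edgeSet).mpr hadj.1, by simpa using hmem⟩
      · rwa [← h]
    exact hu this
  refine le_trans (edgeConn_le' hfsub hdisc') ?_
  have hcover : F' ⊆ (fun ew : Sym2 V' × (W' × W') =>
      s((ew.1.out.1, ew.2.1), (ew.1.out.2, ew.2.2))) '' (F₀ ×ˢ (Set.univ : Set (W' × W'))) := by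
    intro s hs
    induction s using Sym2.ind with
    | _ p q =>
      obtain ⟨hedge, hmap⟩ := hs
      have hmapeq : Sym2.map Prod.fst s(p, q) = s(p.1, q.1) := by
        simp [Sym2.map_pair_eq]
      rw [hmapeq] at hmap
      set e : Sym2 V' := s(p.1, q.1) with he
      have hout : Sym2.mk e.out.1 e.out.2 = e := e.out_eq
      rw [he] at hout
      replace hout := (Sym2.mk_eq_mk_iff (q := (p.1, q.1))).mp hout
      rcases hout with h | h
      · refine ⟨(e, (p.2, q.2)), ⟨hmap, trivial⟩, ?_⟩
        simp only [he, h]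
      · refine ⟨(e, (q.2, p.2)), ⟨hmap, trivial⟩, ?_⟩
        simp only [he, h]
        rw [Sym2.eq_swap]
        rfl
  calc F'.ncard ≤ _ := Set.ncard_le_ncard hcover (Set.Finite.image _ (Set.toFinite _))
    _ ≤ (F₀ ×ˢ (Set.univ : Set (W' × W'))).ncard := Set.ncard_image_le (Set.toFinite _)
    _ = F₀.ncard * Fintype.card W' ^ 2 := by
        rw [ncardProd, Set.ncard_univ, Nat.card_eq_fintype_card, Fintype.card_prod, sq]

private lemma mono_bound (G : SimpleGraph V') (H : SimpleGraph W')
    {A : Set (V' × W')} {x y : V' × W'} (hx : x ∈ A) (hy : y ∉ A)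
    (hmono : ∀ u : V', (∀ w, (u, w) ∈ A) ∨ (∀ w, (u, w) ∉ A)) :
    edgeConn G * Fintype.card W' ^ 2 ≤
      {pq : (V' × W') × (V' × W') |
        (lexProd G H).Adj pq.1 pq.2 ∧ pq.1 ∈ A ∧ pq.2 ∉ A}.ncard := by
  set S : Set V' := {u | ∀ w, (u, w) ∈ A} with hS
  have hfiber : ∀ u : V', u ∉ S → ∀ w, (u, w) ∉ A := by
    intro u hu w
    rcases hmono u with h | h
    · exact absurd h hu
    · exact h w
  set FG : Set (Sym2 V') :=
    {e | e ∈ G.edgeSet ∧ (∃ u ∈ e, u ∈ S) ∧ (∃ u ∈ e, u ∉ S)} with hFG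
  have hconn : edgeConn G ≤ FG.ncard := by
    refine Nat.sInf_le ⟨FG, fun e he => he.1, rfl, ?_⟩
    intro hc
    have hxS : x.1 ∈ S := by
      rcases hmono x.1 with h | h
      · exact h
      · exact absurd (by simpa using hx) (h x.2)
    have hyS : y.1 ∉ S := fun h => hy (by simpa using h y.2)
    refine hyS (reachInv' (P := fun u => u ∈ S) ?_ (hc.preconnected x.1 y.1) hxS)
    intro p q hadj hp
    rw [SimpleGraph.deleteEdges_adj] at hadj
    by_contra hq
    exact hadj.2 ⟨(G.mem_edgeSet).mpr hadj.1,
      ⟨p, Sym2.mem_mk_left _ _, hp⟩, ⟨q, Sym2.mem_mk_right _ _, hq⟩⟩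
  set ψ : Sym2 V' × (W' × W') → (V' × W') × (V' × W') := fun ew =>
    if ew.1.out.1 ∈ S then ((ew.1.out.1, ew.2.1), (ew.1.out.2, ew.2.2))
    else ((ew.1.out.2, ew.2.1), (ew.1.out.1, ew.2.2)) with hψ
  have hout_mem : ∀ e : Sym2 V', ∀ u, u ∈ e → u = e.out.1 ∨ u = e.out.2 := by
    intro e u hu
    have h2 : u ∈ s(e.out.1, e.out.2) := by
      have : s(e.out.1, e.out.2) = e := e.out_eq
      rw [this]; exact hu
    exact Sym2.mem_iff.mp h2
  have hadj_out : ∀ e : Sym2 V', e ∈ G.edgeSet → G.Adj e.out.1 e.out.2 := by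
    intro e he
    have : s(e.out.1, e.out.2) = e := e.out_eq
    rw [← this] at he
    exact he
  have hmaps : ∀ ew ∈ FG ×ˢ (Set.univ : Set (W' × W')), ψ ew ∈
      {pq : (V' × W') × (V' × W') |
        (lexProd G H).Adj pq.1 pq.2 ∧ pq.1 ∈ A ∧ pq.2 ∉ A} := by
    rintro ⟨e, w, w'⟩ ⟨⟨hedge, ⟨uin, huin, hin⟩, ⟨uout, huout, hout⟩⟩, -⟩
    have hGadj := hadj_out e hedge
    by_cases h1 : e.out.1 ∈ S
    · have h2 : e.out.2 ∉ S := by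
        rcases hout_mem e uout huout with rfl | rfl
        · exact absurd h1 hout
        · exact hout
      simp only [hψ, if_pos h1]
      exact ⟨Or.inl hGadj, h1 w, hfiber _ h2 w'⟩
    · have h2 : e.out.2 ∈ S := by
        rcases hout_mem e uin huin with rfl | rfl
        · exact absurd hin h1
        · exact hin
      simp only [hψ, if_neg h1]
      exact ⟨Or.inl hGadj.symm, h2 w, hfiber _ h1 w'⟩
  have hinj : Set.InjOn ψ (FG ×ˢ (Set.univ : Set (W' × W'))) := by
    rintro ⟨e, w, w'⟩ ⟨he, -⟩ ⟨f, t, t'⟩ ⟨hf, -⟩ heq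
    have hef : e = f := by
      have h1 : s((ψ (e, w, w')).1.1, (ψ (e, w, w')).2.1) = e := by
        by_cases h : e.out.1 ∈ S
        · simp only [hψ, if_pos h]
          exact e.out_eq
        · simp only [hψ, if_neg h]
          rw [Sym2.eq_swap]
          exact e.out_eq
      have h2 : s((ψ (f, t, t')).1.1, (ψ (f, t, t')).2.1) = f := by
        by_cases h : f.out.1 ∈ S
        · simp only [hψ, if_pos h]
          exact f.out_eq
        · simp only [hψ, if_neg h]
          rw [Sym2.eq_swap]
          exact f.out_eq
      rw [← h1, ← h2, heq]
    subst hef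
    by_cases h : e.out.1 ∈ S <;>
      simp only [hψ, if_pos, if_neg, h, if_true, if_false, Prod.mk.injEq] at heq <;>
      simp [heq.1.2, heq.2.2]
  calc edgeConn G * Fintype.card W' ^ 2 ≤ FG.ncard * Fintype.card W' ^ 2 :=
        Nat.mul_le_mul_right _ hconn
    _ = (FG ×ˢ (Set.univ : Set (W' × W'))).ncard := by
        rw [ncardProd, Set.ncard_univ, Nat.card_eq_fintype_card, Fintype.card_prod, sq]
    _ ≤ _ := Set.ncard_le_ncard_of_injOn ψ hmaps hinj (Set.toFinite _)

private lemma split_bound (G : SimpleGraph V') (H : SimpleGraph W')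
    (A : Set (V' × W')) (u : V') (v : W') (hv : (u, v) ∈ A)
    (hab : {w | (u, w) ∈ A}.ncard ≤ {w | (u, w) ∉ A}.ncard)
    (h1 : 1 ≤ minDeg G * Fintype.card W') :
    minDeg H + minDeg G * Fintype.card W' ≤
      {pq : (V' × W') × (V' × W') |
        (lexProd G H).Adj pq.1 pq.2 ∧ pq.1 ∈ A ∧ pq.2 ∉ A}.ncard := by
  set D := {pq : (V' × W') × (V' × W') |
    (lexProd G H).Adj pq.1 pq.2 ∧ pq.1 ∈ A ∧ pq.2 ∉ A} with hD
  set Au := {w | (u, w) ∈ A} with hAu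
  set Bu := {w | (u, w) ∉ A} with hBu
  have hva : v ∈ Au := hv
  have hcard : Fintype.card ↥Au ≤ Fintype.card ↥Bu := by
    rw [← Nat.card_eq_fintype_card, ← Nat.card_eq_fintype_card,
      Nat.card_coe_set_eq, Nat.card_coe_set_eq]
    exact hab
  obtain ⟨ι⟩ := Function.Embedding.nonempty_of_card_le hcard
  set g : W' → W' := fun w => if h : w ∈ Au then (ι ⟨w, h⟩ : W') else w with hg
  have hgB : ∀ w ∈ Au, g w ∈ Bu := by
    intro w hw
    simp only [hg, dif_pos hw]
    exact (ι ⟨w, hw⟩).2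
  have hginj : Set.InjOn g Au := by
    intro w₁ h₁ w₂ h₂ heq
    simp only [hg, dif_pos h₁, dif_pos h₂] at heq
    have := ι.injective (Subtype.coe_injective heq)
    exact congrArg Subtype.val this
  set φ : W' × (V' × W') → (V' × W') × (V' × W') := fun t =>
    if t.2 ∈ A then (t.2, (u, g t.1)) else ((u, t.1), t.2) with hφ
  set dom₁ : Set (W' × (V' × W')) :=
    Au ×ˢ ((G.neighborSet u) ×ˢ (Set.univ : Set W')) with hdom₁
  have hmapsφ : ∀ t ∈ dom₁, φ t ∈ D := by
    rintro ⟨w, u', w''⟩ ⟨hw, hu', -⟩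
    have hadj : G.Adj u u' := hu'
    by_cases hA : ((u', w'') : V' × W') ∈ A
    · simp only [hφ, if_pos hA]
      exact ⟨Or.inl hadj.symm, hA, hgB w hw⟩
    · simp only [hφ, if_neg hA]
      exact ⟨Or.inl hadj, hw, hA⟩
  have hinjφ : Set.InjOn φ dom₁ := by
    rintro ⟨w₁, u₁, w₁''⟩ ⟨hw₁, hu₁, -⟩ ⟨w₂, u₂, w₂''⟩ ⟨hw₂, hu₂, -⟩ heq
    have hne₁ : u₁ ≠ u := (SimpleGraph.Adj.ne' (show G.Adj u u₁ from hu₁))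
    have hne₂ : u₂ ≠ u := (SimpleGraph.Adj.ne' (show G.Adj u u₂ from hu₂))
    by_cases hA₁ : ((u₁, w₁'') : V' × W') ∈ A <;>
      by_cases hA₂ : ((u₂, w₂'') : V' × W') ∈ A
    · simp only [hφ, if_pos hA₁, if_pos hA₂, Prod.mk.injEq] at heq
      obtain ⟨h2, -, h4⟩ := heq
      have h5 := hginj hw₁ hw₂ h4
      simp only [Prod.mk.injEq]
      exact ⟨h5, h2⟩
    · simp only [hφ, if_pos hA₁, if_neg hA₂, Prod.mk.injEq] at heq
      exact absurd heq.1.1 hne₁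
    · simp only [hφ, if_neg hA₁, if_pos hA₂, Prod.mk.injEq] at heq
      exact absurd heq.1.1.symm hne₂
    · simp only [hφ, if_neg hA₁, if_neg hA₂, Prod.mk.injEq] at heq
      obtain ⟨⟨-, h2⟩, h3⟩ := heq
      simp only [Prod.mk.injEq]
      exact ⟨h2, h3⟩
  set I₁ := φ '' dom₁ with hI₁
  set I₂ := (fun w => ((u, v), (u, w))) '' (Bu ∩ H.neighborSet v) with hI₂
  have hI₁D : I₁ ⊆ D := Set.image_subset_iff.mpr hmapsφ
  have hI₂D : I₂ ⊆ D := by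
    rintro _ ⟨w, ⟨hwB, hwN⟩, rfl⟩
    exact ⟨Or.inr ⟨rfl, hwN⟩, hv, hwB⟩
  have hI₁card : I₁.ncard = Au.ncard * (degOf G u * Fintype.card W') := by
    rw [hI₁, Set.ncard_image_of_injOn hinjφ, hdom₁, ncardProd, ncardProd,
      Set.ncard_univ, Nat.card_eq_fintype_card]
    rfl
  have hI₂card : I₂.ncard = (Bu ∩ H.neighborSet v).ncard := by
    rw [hI₂]
    apply Set.ncard_image_of_injOn
    intro w₁ _ w₂ _ heq
    exact congrArg (Prod.snd ∘ Prod.snd) heq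
  have hdisj : Disjoint I₁ I₂ := by
    rw [Set.disjoint_left]
    rintro pq hpq1 hpq2
    obtain ⟨⟨w, u', w''⟩, ⟨-, hu', -⟩, rfl⟩ := hpq1
    obtain ⟨w', -, heq⟩ := hpq2
    have hne : u' ≠ u := (SimpleGraph.Adj.ne' (show G.Adj u u' from hu'))
    by_cases hA : ((u', w'') : V' × W') ∈ A
    · simp only [hφ, if_pos hA] at heq
      exact hne (congrArg (Prod.fst ∘ Prod.fst) heq.symm)
    · simp only [hφ, if_neg hA] at heq
      exact hne (congrArg (Prod.fst ∘ Prod.snd) heq.symm)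
  have hcount : Au.ncard * (degOf G u * Fintype.card W') + (Bu ∩ H.neighborSet v).ncard
      ≤ D.ncard := by
    rw [← hI₁card, ← hI₂card, ← Set.ncard_union_eq hdisj (Set.toFinite _) (Set.toFinite _)]
    exact Set.ncard_le_ncard (Set.union_subset hI₁D hI₂D) (Set.toFinite _)
  have hdeg : degOf H v ≤ (Au \ {v}).ncard + (Bu ∩ H.neighborSet v).ncard := by
    refine le_trans (le_trans (Set.ncard_le_ncard ?_ (Set.toFinite _))
      (Set.ncard_union_le _ _)) le_rfl
    intro w hw
    by_cases hwA : w ∈ Au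
    · exact Or.inl ⟨hwA, fun h =>
        (SimpleGraph.Adj.ne' (show H.Adj v w from hw)) (by simpa using h)⟩
    · exact Or.inr ⟨hwA, hw⟩
  have hAucard : (Au \ {v}).ncard + 1 = Au.ncard := Set.ncard_diff_singleton_add_one hva
  have hH : minDeg H ≤ degOf H v := Nat.sInf_le ⟨v, rfl⟩
  have hGu : minDeg G ≤ degOf G u := Nat.sInf_le ⟨u, rfl⟩
  refine le_trans ?_ hcount
  set a1 := (Au \ {v}).ncard
  set cnt := (Bu ∩ H.neighborSet v).ncard
  set k := degOf G u * Fintype.card W'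
  have hk : minDeg G * Fintype.card W' ≤ k := Nat.mul_le_mul_right _ hGu
  have h1k : 1 ≤ k := le_trans h1 hk
  rw [← hAucard]
  calc minDeg H + minDeg G * Fintype.card W' ≤ (a1 + cnt) + k :=
        Nat.add_le_add (le_trans hH hdeg) hk
    _ ≤ (a1 + 1) * k + cnt := by nlinarith

end LexHelpers

theorem stmt11 {V W : Type*} [Fintype V] [Fintype W]
    (G : SimpleGraph V) (H : SimpleGraph W) (hG : G.Connected)
    (hV : 2 ≤ Fintype.card V) (hW : 2 ≤ Fintype.card W) :
    edgeConn (lexProd G H) =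
      min (edgeConn G * Fintype.card W ^ 2) (minDeg H + minDeg G * Fintype.card W) := by
  classical
  have hneV : Nonempty V := Fintype.card_pos_iff.mp (by omega)
  have hneW : Nonempty W := Fintype.card_pos_iff.mp (by omega)
  have hVW : 2 ≤ Fintype.card (V × W) := by
    rw [Fintype.card_prod]; nlinarith
  have h1 : 1 ≤ minDeg G * Fintype.card W := by
    have := one_le_minDeg hG hV
    have h2 : (1 : ℕ) * 1 ≤ minDeg G * Fintype.card W :=
      Nat.mul_le_mul this (by omega)
    simpa using h2
  refine le_antisymm (le_min ?_ ?_) ?_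
  · obtain ⟨F₀, hsub, hcard, hdisc⟩ := exists_min_cut G hV
    have := ub1' G H (by omega) hsub hdisc hV
    rwa [hcard] at this
  · obtain ⟨u₀, hu₀⟩ := exists_minDeg G
    obtain ⟨v₀, hv₀⟩ := exists_minDeg H
    have := ub2' G H u₀ v₀ hW
    rw [lex_degOf, hu₀, hv₀] at this
    exact le_trans this (le_of_eq (add_comm _ _))
  · obtain ⟨F, hsub, hcard, hdisc⟩ := exists_min_cut (lexProd G H) hVW
    rw [← hcard]
    rw [SimpleGraph.connected_iff] at hdisc
    push_neg at hdisc
    have hpre : ¬ ((lexProd G H).deleteEdges F).Preconnected := fun hp =>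
      (hdisc hp).false (hneV.some, hneW.some)
    rw [SimpleGraph.Preconnected] at hpre
    push_neg at hpre
    obtain ⟨x, y, hxy⟩ := hpre
    set A := {p | ((lexProd G H).deleteEdges F).Reachable x p} with hA
    have hx : x ∈ A := SimpleGraph.Reachable.refl x
    have hy : y ∉ A := hxy
    have hclosed : ∀ p q, (lexProd G H).Adj p q → p ∈ A → q ∉ A → s(p, q) ∈ F := by
      intro p q hadj hp hq
      by_contra hn
      refine hq (hp.trans (SimpleGraph.Adj.reachable ?_))
      rw [SimpleGraph.deleteEdges_adj]
      exact ⟨hadj, hn⟩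
    by_cases hmono : ∀ u : V, (∀ w, (u, w) ∈ A) ∨ (∀ w, (u, w) ∉ A)
    · exact le_trans (min_le_left _ _)
        (le_trans (mono_bound G H hx hy hmono) (crossPairs_le_cut hclosed))
    · push_neg at hmono
      obtain ⟨u, hu1, hu2⟩ := hmono
      obtain ⟨w₁, hw₁⟩ := hu1
      obtain ⟨w₂, hw₂⟩ := hu2
      by_cases hab : {w | (u, w) ∈ A}.ncard ≤ {w | (u, w) ∉ A}.ncard
      · exact le_trans (min_le_right _ _)
          (le_trans (split_bound G H A u w₂ hw₂ hab h1) (crossPairs_le_cut hclosed))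
      · have hclosed' : ∀ p q, (lexProd G H).Adj p q → p ∈ Aᶜ → q ∉ Aᶜ → s(p, q) ∈ F := by
          intro p q hadj hp hq
          rw [Set.mem_compl_iff, not_not] at hq
          rw [Set.mem_compl_iff] at hp
          by_contra hn
          refine hp (hq.trans (SimpleGraph.Adj.reachable ?_))
          rw [SimpleGraph.deleteEdges_adj]
          exact ⟨hadj.symm, by rwa [Sym2.eq_swap]⟩
        have habc : {w | (u, w) ∈ Aᶜ}.ncard ≤ {w | (u, w) ∉ Aᶜ}.ncard := by
          have e1 : {w | (u, w) ∈ Aᶜ} = {w | (u, w) ∉ A} := rfl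
          have e2 : {w | (u, w) ∉ Aᶜ} = {w | (u, w) ∈ A} := by
            ext w; simp
          rw [e1, e2]
          exact le_of_not_ge hab
        exact le_trans (min_le_right _ _)
          (le_trans (split_bound G H Aᶜ u w₁ hw₁ habc h1) (crossPairs_le_cut hclosed'))
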